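/- For every p ∈ (0,1), the infimum of I_Cr^p over [-1,0] equals (1/2)·log(1/(4p(1-p))) if p ≥ 1/2, and equals 0 if p < 1/2. -/

import Mathlib

/-- The Cramér rate function of a biased Rademacher distribution with parameter `p`. -/
noncomputable def ICr (p x : ℝ) : ℝ :=
  (1 - x) / 2 * Real.log ((1 - x) / (2 * (1 - p)))
    + (1 + x) / 2 * Real.log ((1 + x) / (2 * p))

private lemma gibbs (a b : ℝ) (ha : 0 ≤ a) (hb : 0 < b) :
    a - b ≤ a * Real.log (a / b) := by
  rcases eq_or_lt_of_le ha with h | h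
  · simp [← h]; linarith
  · have h1 : Real.log (b / a) ≤ b / a - 1 :=
      Real.log_le_sub_one_of_pos (by positivity)
    have h2 : Real.log (a / b) = Real.log a - Real.log b :=
      Real.log_div (ne_of_gt h) (ne_of_gt hb)
    have h3 : Real.log (b / a) = Real.log b - Real.log a :=
      Real.log_div (ne_of_gt hb) (ne_of_gt h)
    have h4 : 1 - b / a ≤ Real.log (a / b) := by rw [h2]; rw [h3] at h1; linarith
    have h5 : a * (1 - b / a) ≤ a * Real.log (a / b) :=
      mul_le_mul_of_nonneg_left h4 (le_of_lt h)
    have h6 : a * (1 - b / a) = a - b := by field_simp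
    linarith

private lemma mul_log_split (a b : ℝ) (ha : 0 ≤ a) (hb : 0 < b) :
    a * Real.log (a / b) = a * Real.log (2 * a) + a * Real.log (1 / (2 * b)) := by
  rcases eq_or_lt_of_le ha with h | h
  · simp [← h]
  · have harg : a / b = (2 * a) * (1 / (2 * b)) := by field_simp
    rw [harg, Real.log_mul (by positivity) (by positivity)]
    ring

theorem ICr_inf_left (p : ℝ) (hp : p ∈ Set.Ioo (0 : ℝ) 1) :
    sInf (ICr p '' Set.Icc (-1 : ℝ) 0)
      = if 1 / 2 ≤ p then 1 / 2 * Real.log (1 / (4 * p * (1 - p))) else 0 := by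
  obtain ⟨hp0, hp1⟩ := hp
  have h1p : (0:ℝ) < 1 - p := by linarith
  have hICr : ∀ x : ℝ, ICr p x
      = (1 - x) / 2 * Real.log (((1 - x) / 2) / (1 - p))
        + (1 + x) / 2 * Real.log (((1 + x) / 2) / p) := by
    intro x
    unfold ICr
    rw [div_div, div_div]
  -- nonnegativity on [-1, 1]
  have hnonneg : ∀ x ∈ Set.Icc (-1:ℝ) 1, 0 ≤ ICr p x := by
    intro x hx
    obtain ⟨hx1, hx2⟩ := hx
    have ha : (0:ℝ) ≤ (1 - x) / 2 := by linarith
    have hc : (0:ℝ) ≤ (1 + x) / 2 := by linarith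
    have g1 := gibbs ((1 - x) / 2) (1 - p) ha h1p
    have g2 := gibbs ((1 + x) / 2) p hc hp0
    rw [hICr]
    linarith
  have hlogsum : Real.log (1 / (2 * (1 - p))) + Real.log (1 / (2 * p))
      = Real.log (1 / (4 * p * (1 - p))) := by
    rw [← Real.log_mul (by positivity) (by positivity)]
    congr 1
    field_simp
    ring
  rcases le_or_gt (1 / 2 : ℝ) p with hhalf | hhalf
  · rw [if_pos hhalf]
    set m := 1 / 2 * Real.log (1 / (4 * p * (1 - p))) with hm
    -- value at 0
    have hval : ICr p 0 = m := by
      rw [hICr]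
      norm_num
      rw [div_div, div_div, hm]
      linarith [hlogsum]
    -- lower bound
    have hlb : ∀ x ∈ Set.Icc (-1:ℝ) 0, m ≤ ICr p x := by
      intro x hx
      obtain ⟨hx1, hx2⟩ := hx
      have ha : (0:ℝ) ≤ (1 - x) / 2 := by linarith
      have hc : (0:ℝ) ≤ (1 + x) / 2 := by linarith
      rw [hICr, mul_log_split _ _ ha h1p, mul_log_split _ _ hc hp0]
      -- entropy part
      have e1 := gibbs ((1 - x) / 2) (1 / 2) ha (by norm_num)
      have e2 := gibbs ((1 + x) / 2) (1 / 2) hc (by norm_num)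
      have r1 : ((1 - x) / 2) / (1 / 2) = 2 * ((1 - x) / 2) := by ring
      have r2 : ((1 + x) / 2) / (1 / 2) = 2 * ((1 + x) / 2) := by ring
      rw [r1] at e1
      rw [r2] at e2
      -- linear part
      have hL : Real.log (1 / (2 * p)) ≤ Real.log (1 / (2 * (1 - p))) := by
        apply Real.log_le_log (by positivity)
        apply div_le_div_of_nonneg_left (by norm_num) (by positivity)
        linarith
      have hx0 : x ≤ 0 := hx2
      nlinarith [hlogsum, mul_nonneg (neg_nonneg.mpr hx0)
        (sub_nonneg.mpr hL)]
    apply le_antisymm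
    · exact csInf_le ⟨m, fun y ⟨x, hx, hxy⟩ => hxy ▸ hlb x hx⟩
        ⟨0, ⟨Set.mem_Icc.mpr ⟨by norm_num, le_refl 0⟩, hval⟩⟩
    · exact le_csInf ⟨ICr p 0, ⟨0, Set.mem_Icc.mpr ⟨by norm_num, le_refl 0⟩, rfl⟩⟩
        (fun y ⟨x, hx, hxy⟩ => hxy ▸ hlb x hx)
  · rw [if_neg (not_le.mpr hhalf)]
    have hmem : 2 * p - 1 ∈ Set.Icc (-1:ℝ) 0 := by
      constructor <;> linarith
    have hval : ICr p (2 * p - 1) = 0 := by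
      unfold ICr
      have e1 : (1 - (2 * p - 1)) / (2 * (1 - p)) = 1 := by
        field_simp; ring
      have e2 : (1 + (2 * p - 1)) / (2 * p) = 1 := by
        field_simp
        ring
      rw [e1, e2, Real.log_one]
      ring
    have hlb : ∀ x ∈ Set.Icc (-1:ℝ) 0, (0:ℝ) ≤ ICr p x := by
      intro x hx
      exact hnonneg x ⟨hx.1, le_trans hx.2 (by norm_num)⟩
    apply le_antisymm
    · exact csInf_le ⟨0, fun y ⟨x, hx, hxy⟩ => hxy ▸ hlb x hx⟩
        ⟨2 * p - 1, hmem, hval⟩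
    · exact le_csInf ⟨ICr p (2 * p - 1), ⟨2 * p - 1, hmem, rfl⟩⟩
        (fun y ⟨x, hx, hxy⟩ => hxy ▸ hlb x hx)
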